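/- Let p be a prime and f ∈ WKS^0_{p,2} with f(0) ≠ 0; let ξ ∈ ℤ_p be the unique zero of f and τ ∈ ℤ_p the unique fixed point of f. Then v_p(f(0)) = v_p(τ) = 1 + v_p(ξ); moreover τ/(p·ξ) ≡ −Δ¹f(0)/p (mod pℤ_p), equivalently ‖τ + Δ¹f(0)·ξ‖_p ≤ p^{−2}·‖ξ‖_p, and f(0)/τ ≡ 1 (mod pℤ_p), equivalently ‖f(0) − τ‖_p ≤ p^{−1}·‖τ‖_p. -/

import Mathlib

open Finset

/-- The forward difference operator `Δ_h^n` with increment `h ≥ 1`: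
`Δ_h^n f(s) = ∑_{ν=0}^n (n choose ν)·(−1)^(n−ν)·f(s+νh)`. -/
noncomputable def deltaH (p : ℕ) [Fact p.Prime] (h : ℕ) (f : ℤ_[p] → ℤ_[p]) (n : ℕ)
    (s : ℤ_[p]) : ℤ_[p] :=
  ∑ ν ∈ Finset.range (n + 1),
    (n.choose ν : ℤ_[p]) * (-1) ^ (n - ν) * f (s + (ν : ℤ_[p]) * (h : ℤ_[p]))

/-- `f ∈ KS_{p,2}`: `f` is continuous and satisfies the Kummer type congruences
`Δ^n f(s) ∈ p^n ℤ_p` for all integers `n ≥ 0` and all `s ∈ ℤ_p`. -/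
def KS2 (p : ℕ) [Fact p.Prime] (f : ℤ_[p] → ℤ_[p]) : Prop :=
  Continuous f ∧ ∀ (n : ℕ) (s : ℤ_[p]), (p : ℤ_[p]) ^ n ∣ deltaH p 1 f n s

/-- `f ∈ WKS^0_{p,2}`: `f ∈ KS_{p,2}`, `f(0) ∈ pℤ_p`, `Δ¹f(0)/p` is a unit of `ℤ_p`, and
additionally `Δ²f(0)/4 ∈ 2ℤ_2` (i.e. `8 ∣ Δ²f(0)`) in case `p = 2`. -/
def WKS0 (p : ℕ) [Fact p.Prime] (f : ℤ_[p] → ℤ_[p]) : Prop :=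
  KS2 p f ∧ (p : ℤ_[p]) ∣ f 0 ∧
    (∃ u : ℤ_[p], IsUnit u ∧ deltaH p 1 f 1 0 = (p : ℤ_[p]) * u) ∧
    (p = 2 → (p : ℤ_[p]) ^ 3 ∣ deltaH p 1 f 2 0)

section Aux

variable {p : ℕ} [hp : Fact p.Prime]

lemma deltaH_eq_fwdDiff (f : ℤ_[p] → ℤ_[p]) (n : ℕ) (s : ℤ_[p]) :
    deltaH p 1 f n s = (fwdDiff 1)^[n] f s := by
  rw [fwdDiff_iter_eq_sum_shift, deltaH]
  refine Finset.sum_congr rfl fun k _ => ?_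
  simp only [zsmul_eq_mul, nsmul_eq_mul, mul_one, Nat.cast_one]
  push_cast
  ring

lemma newton (f : ℤ_[p] → ℤ_[p]) (n : ℕ) :
    f n = ∑ k ∈ Finset.range (n + 1), (n.choose k : ℤ_[p]) * deltaH p 1 f k 0 := by
  have h := shift_eq_sum_fwdDiff_iter (1 : ℤ_[p]) f n 0
  simp only [nsmul_eq_mul, mul_one, zero_add, smul_eq_mul] at h
  rw [h]
  exact Finset.sum_congr rfl fun k _ => by rw [deltaH_eq_fwdDiff]

lemma isUnit_natCast_of_not_dvd {k : ℕ} (h : ¬ p ∣ k) : IsUnit (k : ℤ_[p]) := by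
  rw [PadicInt.isUnit_iff]
  have h1 : ‖(k : ℤ_[p])‖ ≤ 1 := PadicInt.norm_le_one _
  rcases lt_or_eq_of_le h1 with h2 | h2
  · exfalso
    have := (PadicInt.norm_int_lt_one_iff_dvd (k : ℤ)).mp (by exact_mod_cast h2)
    exact h (by exact_mod_cast this)
  · exact h2

lemma padicValNat_add_two_le {k : ℕ} (hk : 2 ≤ k) (hex : ¬(p = 2 ∧ k = 2)) :
    padicValNat p k + 2 ≤ k := by
  set m := padicValNat p k with hm
  have hk0 : k ≠ 0 := by omega
  have hdvd : p ^ m ∣ k := pow_padicValNat_dvd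
  have hle : p ^ m ≤ k := Nat.le_of_dvd (by omega) hdvd
  have hp2 : 2 ≤ p := hp.out.two_le
  rcases Nat.eq_zero_or_pos m with h0 | h1
  · omega
  rcases Nat.lt_or_ge m 2 with h2 | h2
  · have hm1 : m = 1 := by omega
    have : p ≤ k := by rw [hm1] at hle; simpa using hle
    rcases Nat.lt_or_ge p 3 with hp3 | hp3
    · have hp2' : p = 2 := by omega
      have : k ≠ 2 := fun h => hex ⟨hp2', h⟩
      omega
    · omega
  · have h2m : ∀ j, 2 ≤ j → j + 2 ≤ 2 ^ j := by
      intro j hj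
      induction j with
      | zero => omega
      | succ i ih =>
        rcases Nat.lt_or_ge i 2 with hi | hi
        · interval_cases i <;> simp_all
        · have := ih hi
          have : 2 ^ i ≥ 1 := Nat.one_le_two_pow
          calc i + 1 + 2 ≤ 2 ^ i + 2 ^ i := by omega
          _ = 2 ^ (i+1) := by ring
    have hle2 : 2 ^ m ≤ p ^ m := Nat.pow_le_pow_left hp2 m
    have := h2m m h2
    omega

lemma key_dvd (f : ℤ_[p] → ℤ_[p])
    (hks : ∀ (n : ℕ) (s : ℤ_[p]), (p : ℤ_[p]) ^ n ∣ deltaH p 1 f n s)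
    (h8 : p = 2 → (p : ℤ_[p]) ^ 3 ∣ deltaH p 1 f 2 0)
    (n k : ℕ) (hk : 2 ≤ k) :
    (p : ℤ_[p]) ^ 2 * (n : ℤ_[p]) ∣ (n.choose k : ℤ_[p]) * deltaH p 1 f k 0 := by
  rcases Nat.eq_zero_or_pos n with rfl | hn
  · rw [Nat.choose_eq_zero_of_lt (by omega : (0:ℕ) < k)]
    simp
  obtain ⟨n', rfl⟩ : ∃ n', n = n' + 1 := ⟨n - 1, by omega⟩
  obtain ⟨k', rfl⟩ : ∃ k', k = k' + 1 := ⟨k - 1, by omega⟩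
  have hid : ((k' + 1 : ℕ) : ℤ_[p]) * ((n' + 1).choose (k' + 1) : ℤ_[p])
      = ((n' + 1 : ℕ) : ℤ_[p]) * (n'.choose k' : ℤ_[p]) := by
    have hcast : (((n' + 1) * n'.choose k' : ℕ) : ℤ_[p])
        = (((n' + 1).choose (k' + 1) * (k' + 1) : ℕ) : ℤ_[p]) := by
      rw [Nat.add_one_mul_choose_eq]
    push_cast at hcast ⊢
    linear_combination -hcast
  by_cases hex : p = 2 ∧ k' + 1 = 2
  · obtain ⟨hp2, hk2⟩ := hex
    obtain ⟨b, hb⟩ := h8 hp2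
    have hk2' : k' = 1 := by omega
    subst hk2'
    rw [hb]
    have h2 : ((2:ℕ) : ℤ_[p]) * ((n' + 1).choose 2 : ℤ_[p])
        = ((n' + 1 : ℕ) : ℤ_[p]) * (n'.choose 1 : ℤ_[p]) := hid
    have hpc : ((2:ℕ) : ℤ_[p]) = (p : ℤ_[p]) :=
      congrArg (fun t : ℕ => (t : ℤ_[p])) hp2.symm
    rw [hpc] at h2
    refine ⟨(n'.choose 1 : ℤ_[p]) * b, ?_⟩
    have h3 : (p:ℤ_[p])^3 = (p:ℤ_[p])^2 * p := by ring
    rw [h3, ← mul_assoc, mul_comm ((n' + 1).choose 2 : ℤ_[p]) ((p:ℤ_[p])^2 * p)]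
    rw [mul_assoc ((p:ℤ_[p])^2) p, h2]
    ring
  · set k := k' + 1 with hkdef
    set m := padicValNat p k with hm
    have hmle : m + 2 ≤ k := padicValNat_add_two_le hk hex
    obtain ⟨b, hb⟩ := hks k 0
    obtain ⟨k₀, hk₀⟩ : ∃ k₀, k = p ^ m * k₀ := pow_padicValNat_dvd
    have hk₀nd : ¬ p ∣ k₀ := by
      intro ⟨c, hc⟩
      have hkne : k ≠ 0 := by omega
      have hdd : p ^ (m + 1) ∣ k := ⟨c, by rw [hk₀, hc]; ring⟩
      have := (padicValNat_dvd_iff_le hkne).mp hdd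
      omega
    obtain ⟨w, hw⟩ := (isUnit_natCast_of_not_dvd hk₀nd : IsUnit (k₀ : ℤ_[p])).exists_right_inv
    obtain ⟨j, hj⟩ : ∃ j, k = m + 2 + j := ⟨k - m - 2, by omega⟩
    have hpm : (p : ℤ_[p]) ^ m * ((n' + 1).choose k : ℤ_[p])
        = ((n' + 1 : ℕ) : ℤ_[p]) * (n'.choose k' : ℤ_[p]) * w := by
      have hcast : ((k : ℕ) : ℤ_[p]) = (p : ℤ_[p]) ^ m * (k₀ : ℤ_[p]) := by
        rw [hk₀]; push_cast; ring
      calc (p : ℤ_[p]) ^ m * ((n' + 1).choose k : ℤ_[p])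
          = (p : ℤ_[p]) ^ m * ((k₀ : ℤ_[p]) * w) * ((n' + 1).choose k : ℤ_[p]) := by
            rw [hw]; ring
        _ = (((k : ℕ) : ℤ_[p]) * ((n' + 1).choose k : ℤ_[p])) * w := by
            rw [hcast]; ring
        _ = ((n' + 1 : ℕ) : ℤ_[p]) * (n'.choose k' : ℤ_[p]) * w := by rw [hid]
    refine ⟨(n'.choose k' : ℤ_[p]) * w * (p : ℤ_[p]) ^ j * b, ?_⟩
    rw [hb]
    calc ((n' + 1).choose k : ℤ_[p]) * ((p : ℤ_[p]) ^ k * b)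
        = ((p : ℤ_[p]) ^ m * ((n' + 1).choose k : ℤ_[p])) * (p : ℤ_[p]) ^ (2 + j) * b := by
          rw [hj]; ring
      _ = ((n' + 1 : ℕ) : ℤ_[p]) * (n'.choose k' : ℤ_[p]) * w * (p : ℤ_[p]) ^ (2 + j) * b := by
          rw [hpm]
      _ = (p : ℤ_[p]) ^ 2 * ((n' + 1 : ℕ) : ℤ_[p])
            * ((n'.choose k' : ℤ_[p]) * w * (p : ℤ_[p]) ^ j * b) := by
          ring

lemma deltaH_zero (f : ℤ_[p] → ℤ_[p]) : deltaH p 1 f 0 0 = f 0 := by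
  simp [deltaH]

lemma nat_approx (f : ℤ_[p] → ℤ_[p])
    (hks : ∀ (n : ℕ) (s : ℤ_[p]), (p : ℤ_[p]) ^ n ∣ deltaH p 1 f n s)
    (h8 : p = 2 → (p : ℤ_[p]) ^ 3 ∣ deltaH p 1 f 2 0) (n : ℕ) :
    (p : ℤ_[p]) ^ 2 * (n : ℤ_[p]) ∣ f n - f 0 - deltaH p 1 f 1 0 * n := by
  rcases n with _ | n'
  · simp
  set n := n' + 1 with hn
  have hnewton := newton f n
  have hsplit : ∑ k ∈ Finset.range (n + 1), (n.choose k : ℤ_[p]) * deltaH p 1 f k 0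
      = f 0 + deltaH p 1 f 1 0 * n
        + ∑ k ∈ Finset.Ico 2 (n + 1), (n.choose k : ℤ_[p]) * deltaH p 1 f k 0 := by
    rw [Finset.range_eq_Ico,
      Finset.sum_eq_sum_Ico_succ_bot (by omega : 0 < n + 1),
      Finset.sum_eq_sum_Ico_succ_bot (by omega : 1 < n + 1)]
    rw [deltaH_zero, Nat.choose_zero_right, Nat.choose_one_right]
    push_cast
    ring
  have hdecomp : f n - f 0 - deltaH p 1 f 1 0 * n
      = ∑ k ∈ Finset.Ico 2 (n + 1), (n.choose k : ℤ_[p]) * deltaH p 1 f k 0 := by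
    rw [hnewton, hsplit]; ring
  rw [hdecomp]
  exact Finset.dvd_sum fun k hk => key_dvd f hks h8 n k (Finset.mem_Ico.mp hk).1

lemma norm_add_eq_left {a b : ℤ_[p]} (h : ‖b‖ < ‖a‖) : ‖a + b‖ = ‖a‖ := by
  rw [PadicInt.norm_add_eq_max_of_ne (by linarith : ‖a‖ ≠ ‖b‖)]
  exact max_eq_left h.le

lemma norm_sub_eq_left {a b : ℤ_[p]} (h : ‖b‖ < ‖a‖) : ‖a - b‖ = ‖a‖ := by
  rw [sub_eq_add_neg]
  exact norm_add_eq_left (by rwa [norm_neg])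

lemma norm_le_of_dvd {a b : ℤ_[p]} (h : a ∣ b) : ‖b‖ ≤ ‖a‖ := by
  obtain ⟨c, rfl⟩ := h
  calc ‖a * c‖ = ‖a‖ * ‖c‖ := norm_mul _ _
    _ ≤ ‖a‖ * 1 := by
        have h1 := PadicInt.norm_le_one c
        have h2 : (0:ℝ) ≤ ‖a‖ := norm_nonneg a
        nlinarith
    _ = ‖a‖ := mul_one _

lemma main_est (f : ℤ_[p] → ℤ_[p]) (hc : Continuous f)
    (hks : ∀ (n : ℕ) (s : ℤ_[p]), (p : ℤ_[p]) ^ n ∣ deltaH p 1 f n s)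
    (h8 : p = 2 → (p : ℤ_[p]) ^ 3 ∣ deltaH p 1 f 2 0) (x : ℤ_[p]) :
    ‖f x - f 0 - deltaH p 1 f 1 0 * x‖ ≤ (p : ℝ) ^ (-2 : ℤ) * ‖x‖ := by
  by_cases hx : x = 0
  · subst hx; simp
  have hp1 : (1:ℝ) < p := by exact_mod_cast hp.out.one_lt
  have hxpos : 0 < ‖x‖ := norm_pos_iff.mpr hx
  set t := (p : ℝ) ^ (-2 : ℤ) * ‖x‖ with ht
  have ht0 : 0 < t := by positivity
  obtain ⟨δ, hδ0, hδ⟩ := Metric.continuousAt_iff.mp (hc.continuousAt (x := x)) t ht0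
  obtain ⟨n, hn⟩ := PadicInt.denseRange_natCast.exists_dist_lt x
    (lt_min (lt_min hδ0 ht0) hxpos)
  rw [dist_eq_norm] at hn
  have hxn : ‖x - (n : ℤ_[p])‖ < min (min δ t) ‖x‖ := hn
  have h1 : ‖f n - f x‖ < t := by
    have hd : dist (n : ℤ_[p]) x < δ := by
      rw [dist_eq_norm, ← norm_neg]
      simp only [neg_sub]
      exact lt_of_lt_of_le hxn (le_trans (min_le_left _ _) (min_le_left _ _))
    have := hδ hd
    rwa [dist_eq_norm] at this
  have h2 : ‖(n : ℤ_[p])‖ = ‖x‖ := by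
    have := norm_sub_eq_left (a := x) (b := x - n)
      (lt_of_lt_of_le hxn (min_le_right _ _))
    simpa using this
  have h3 : ‖f n - f 0 - deltaH p 1 f 1 0 * n‖ ≤ t := by
    have := norm_le_of_dvd (nat_approx f hks h8 n)
    refine le_trans this ?_
    rw [norm_mul, h2, ht, PadicInt.norm_p_pow]
    norm_num
  have h4 : ‖deltaH p 1 f 1 0 * ((n : ℤ_[p]) - x)‖ ≤ t := by
    rw [norm_mul]
    have hd : ‖(n : ℤ_[p]) - x‖ ≤ t := by
      rw [← norm_neg]
      simp only [neg_sub]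
      exact le_of_lt (lt_of_lt_of_le hxn (le_trans (min_le_left _ _) (min_le_right _ _)))
    have h5 := PadicInt.norm_le_one (deltaH p 1 f 1 0)
    nlinarith [norm_nonneg ((n : ℤ_[p]) - x), norm_nonneg (deltaH p 1 f 1 0)]
  have hdecomp : f x - f 0 - deltaH p 1 f 1 0 * x
      = (f x - f n) + (f n - f 0 - deltaH p 1 f 1 0 * n)
        + deltaH p 1 f 1 0 * ((n : ℤ_[p]) - x) := by ring
  rw [hdecomp]
  refine le_trans (PadicInt.nonarchimedean _ _) (max_le ?_ h4)
  refine le_trans (PadicInt.nonarchimedean _ _) (max_le ?_ h3)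
  rw [← norm_neg]; simp only [neg_sub]; exact h1.le

lemma val_eq_of_norm_eq {a b : ℤ_[p]} (ha : a ≠ 0) (hb : b ≠ 0) (h : ‖a‖ = ‖b‖) :
    a.valuation = b.valuation := by
  rw [PadicInt.norm_eq_zpow_neg_valuation ha, PadicInt.norm_eq_zpow_neg_valuation hb] at h
  have hp1 : (1:ℝ) < p := by exact_mod_cast hp.out.one_lt
  have := zpow_right_injective₀ (by positivity : (0:ℝ) < p) (by linarith : (p:ℝ) ≠ 1) h
  omega

end Aux

theorem stmt11 (p : ℕ) [Fact p.Prime] (f : ℤ_[p] → ℤ_[p]) (hf : WKS0 p f) (h0 : f 0 ≠ 0)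
    (ξ τ : ℤ_[p]) (hξ : f ξ = 0) (hτ : f τ = τ) :
    (f 0).valuation = τ.valuation ∧ τ.valuation = 1 + ξ.valuation ∧
      ‖τ + deltaH p 1 f 1 0 * ξ‖ ≤ (p : ℝ) ^ (-2 : ℤ) * ‖ξ‖ ∧
      ‖f 0 - τ‖ ≤ (p : ℝ)⁻¹ * ‖τ‖ := by
  obtain ⟨⟨hc, hks⟩, hf0, ⟨u, hu, ha1⟩, h8⟩ := hf
  have hp' : p.Prime := Fact.out
  set a1 := deltaH p 1 f 1 0 with ha1def
  have hp1 : (1:ℝ) < p := by exact_mod_cast hp'.one_lt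
  have hP0 : (0:ℝ) < p := by linarith
  have hPne : (p:ℝ) ≠ 0 := ne_of_gt hP0
  have hPinv0 : (0:ℝ) < (p:ℝ)⁻¹ := by positivity
  have hPinv1 : (p:ℝ)⁻¹ < 1 := by
    rw [inv_lt_one_iff₀]; right; exact hp1
  have hP2 : (p:ℝ) ^ (-2 : ℤ) = (p:ℝ)⁻¹ * (p:ℝ)⁻¹ := by
    rw [show (-2:ℤ) = -1 + -1 by norm_num, zpow_add₀ hPne, zpow_neg_one]
  have ha1norm : ‖a1‖ = (p:ℝ)⁻¹ := by
    rw [ha1, norm_mul, PadicInt.norm_p, PadicInt.isUnit_iff.mp hu, mul_one]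
  have hq : (0:ℝ) < (p:ℝ) ^ (-2:ℤ) := zpow_pos hP0 _
  have hq1 : (p:ℝ) ^ (-2:ℤ) < (p:ℝ)⁻¹ := by
    rw [hP2]
    nlinarith
  have hq2 : (p:ℝ) ^ (-2:ℤ) < 1 := by linarith
  have hξ0 : ξ ≠ 0 := by rintro rfl; exact h0 hξ
  have hξn : 0 < ‖ξ‖ := norm_pos_iff.mpr hξ0
  have hA : ‖f 0 + a1 * ξ‖ ≤ (p:ℝ) ^ (-2 : ℤ) * ‖ξ‖ := by
    have h := main_est f hc hks h8 ξ
    rw [hξ, show (0:ℤ_[p]) - f 0 - a1 * ξ = -(f 0 + a1 * ξ) from by ring, norm_neg] at h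
    exact h
  have hB : ‖τ - f 0 - a1 * τ‖ ≤ (p:ℝ) ^ (-2 : ℤ) * ‖τ‖ := by
    have h := main_est f hc hks h8 τ
    rwa [hτ] at h
  have hτ0 : τ ≠ 0 := by
    rintro rfl
    rw [show (0:ℤ_[p]) - f 0 - a1 * 0 = -(f 0) from by ring, norm_neg] at hB
    simp only [norm_zero, mul_zero] at hB
    exact h0 (norm_le_zero_iff.mp hB)
  have hτn : 0 < ‖τ‖ := norm_pos_iff.mpr hτ0
  -- ‖f 0‖ = p⁻¹ ‖ξ‖
  have haξ : ‖a1 * ξ‖ = (p:ℝ)⁻¹ * ‖ξ‖ := by rw [norm_mul, ha1norm]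
  have hnf0 : ‖f 0‖ = (p:ℝ)⁻¹ * ‖ξ‖ := by
    have hlt : ‖f 0 + a1 * ξ‖ < ‖a1 * ξ‖ := by
      refine lt_of_le_of_lt hA ?_
      rw [haξ]
      exact mul_lt_mul_of_pos_right hq1 hξn
    have hrw : f 0 = -(a1 * ξ) + (f 0 + a1 * ξ) := by ring
    rw [hrw, norm_add_eq_left (by rwa [norm_neg]), norm_neg, haξ]
  -- ‖τ‖ = ‖f 0‖
  have haτ : ‖a1 * τ‖ = (p:ℝ)⁻¹ * ‖τ‖ := by rw [norm_mul, ha1norm]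
  have hnτ : ‖τ‖ = ‖f 0‖ := by
    have h1 : ‖τ - a1 * τ‖ = ‖τ‖ := by
      refine norm_sub_eq_left ?_
      rw [haτ]
      nlinarith [mul_lt_mul_of_pos_right hPinv1 hτn]
    have h3 : ‖f 0 + (τ - f 0 - a1 * τ)‖ = ‖τ‖ := by
      rw [show f 0 + (τ - f 0 - a1 * τ) = τ - a1 * τ from by ring, h1]
    have h4 : ‖τ - f 0 - a1 * τ‖ < ‖f 0 + (τ - f 0 - a1 * τ)‖ := by
      rw [h3]
      refine lt_of_le_of_lt hB ?_
      nlinarith [mul_lt_mul_of_pos_right hq2 hτn]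
    have hrw : f 0 = (f 0 + (τ - f 0 - a1 * τ)) - (τ - f 0 - a1 * τ) := by ring
    rw [hrw, norm_sub_eq_left h4, h3]
  refine ⟨val_eq_of_norm_eq h0 hτ0 hnτ.symm, ?_, ?_, ?_⟩
  · -- τ.valuation = 1 + ξ.valuation
    have hval : ‖τ‖ = (p:ℝ) ^ (-(1 + (ξ.valuation : ℤ))) := by
      rw [hnτ, hnf0, PadicInt.norm_eq_zpow_neg_valuation hξ0, neg_add,
        zpow_add₀ hPne, zpow_neg_one]
    rw [PadicInt.norm_eq_zpow_neg_valuation hτ0] at hval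
    have := zpow_right_injective₀ hP0 (by linarith : (p:ℝ) ≠ 1) hval
    omega
  · -- ‖τ + a1 ξ‖ ≤ p^{-2} ‖ξ‖
    have b1 : ‖τ - f 0 - a1 * τ‖ ≤ (p:ℝ) ^ (-2 : ℤ) * ‖ξ‖ := by
      refine le_trans hB ?_
      rw [hnτ, hnf0]
      nlinarith [mul_le_mul_of_nonneg_right hPinv1.le hξn.le, hq,
        mul_le_mul_of_nonneg_left (mul_le_mul_of_nonneg_right hPinv1.le hξn.le) hq.le]
    have b3 : ‖a1 * τ‖ ≤ (p:ℝ) ^ (-2 : ℤ) * ‖ξ‖ := by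
      rw [haτ, hnτ, hnf0, hP2]
      nlinarith [hξn, hPinv0]
    have hrw : τ + a1 * ξ = ((τ - f 0 - a1 * τ) + (f 0 + a1 * ξ)) + a1 * τ := by ring
    rw [hrw]
    refine le_trans (PadicInt.nonarchimedean _ _) (max_le ?_ b3)
    exact le_trans (PadicInt.nonarchimedean _ _) (max_le b1 hA)
  · -- ‖f 0 - τ‖ ≤ p⁻¹ ‖τ‖
    have b1 : ‖-(a1 * τ)‖ ≤ (p:ℝ)⁻¹ * ‖τ‖ := by rw [norm_neg, haτ]
    have b2 : ‖-(τ - f 0 - a1 * τ)‖ ≤ (p:ℝ)⁻¹ * ‖τ‖ := by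
      rw [norm_neg]
      refine le_trans hB ?_
      rw [hP2]
      nlinarith [mul_le_mul_of_nonneg_left (mul_le_mul_of_nonneg_right hPinv1.le hτn.le) hPinv0.le]
    have hrw : f 0 - τ = -(a1 * τ) + -(τ - f 0 - a1 * τ) := by ring
    rw [hrw]
    exact le_trans (PadicInt.nonarchimedean _ _) (max_le b1 b2)
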